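/- Let F be an upper-truncated Gaussian with parameters (μ, σx²) truncated at f*, and let G ∼ N(μ, σx²) be untruncated. Then the differential entropy of F is at most the differential entropy of G, i.e., H(F) ≤ (1/2) log(2π e σx²), with equality only in the limit f* → ∞. Equivalently, for all h ∈ ℝ, h ψ(h)/(2Ψ(h)) − log Ψ(h) ≥ 0. -/

import Mathlib

open MeasureTheory ProbabilityTheory Real
open Set Filter
open scoped Topology

/-- Gaussian density N(z; m, s²). -/
noncomputable def gauss (m s2 z : ℝ) : ℝ :=
  (Real.sqrt (2 * Real.pi * s2))⁻¹ * Real.exp (-(z - m) ^ 2 / (2 * s2))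

/-- Standard Gaussian density ψ. -/
noncomputable def stdPdf (t : ℝ) : ℝ := gauss 0 1 t

/-- Standard Gaussian CDF Ψ. -/
noncomputable def stdCdf (t : ℝ) : ℝ := ∫ u in Set.Iic t, stdPdf u

lemma stdPdf_eq (t : ℝ) : stdPdf t = (Real.sqrt (2 * Real.pi))⁻¹ * Real.exp (-(t ^ 2) / 2) := by
  simp [stdPdf, gauss]

lemma stdPdf_pos (t : ℝ) : 0 < stdPdf t := by
  rw [stdPdf_eq]
  positivity

lemma continuous_stdPdf : Continuous stdPdf := by
  simp only [funext stdPdf_eq]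
  continuity

lemma integrable_stdPdf : Integrable stdPdf := by
  simp only [funext stdPdf_eq]
  have h := (integrable_exp_neg_mul_sq (b := (1:ℝ)/2) (by norm_num)).const_mul
      (Real.sqrt (2 * Real.pi))⁻¹
  refine h.congr ?_
  filter_upwards with x
  ring_nf

lemma integral_stdPdf : ∫ u, stdPdf u = 1 := by
  have h := integral_gaussian ((1:ℝ)/2)
  have : ∫ u, stdPdf u = (Real.sqrt (2 * Real.pi))⁻¹ * ∫ x : ℝ, Real.exp (-(1/2) * x ^ 2) := by
    rw [← integral_const_mul]
    congr 1 with x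
    rw [stdPdf_eq]
    ring_nf
  rw [this, h]
  rw [show π / (1/2 : ℝ) = 2 * π by ring]
  rw [inv_mul_cancel₀]
  positivity

lemma stdCdf_pos (t : ℝ) : 0 < stdCdf t := by
  rw [stdCdf]
  rw [MeasureTheory.setIntegral_pos_iff_support_of_nonneg_ae
    (Filter.Eventually.of_forall fun x => (stdPdf_pos x).le) integrable_stdPdf.integrableOn]
  have : Function.support stdPdf = Set.univ := by
    ext x; simp [Function.mem_support, (stdPdf_pos x).ne']
  rw [this, Set.univ_inter]
  simp [Real.volume_Iic]

lemma stdCdf_le_one (t : ℝ) : stdCdf t ≤ 1 := by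
  rw [stdCdf, ← integral_stdPdf]
  exact setIntegral_le_integral integrable_stdPdf
    (Filter.Eventually.of_forall fun x => (stdPdf_pos x).le)

lemma stdCdf_zero : stdCdf 0 = 1 / 2 := by
  have hsym : ∫ u in Set.Iic (0:ℝ), stdPdf u = ∫ u in Set.Ioi (0:ℝ), stdPdf u := by
    have : ∫ u in Set.Iic (0:ℝ), stdPdf u = ∫ u in Set.Iic (0:ℝ), stdPdf (-u) := by
      congr 1 with u
      rw [stdPdf_eq, stdPdf_eq]
      ring_nf
    rw [this, integral_comp_neg_Iic, neg_zero]
  have hsplit : (∫ u in Set.Iic (0:ℝ), stdPdf u) + ∫ u in Set.Ioi (0:ℝ), stdPdf u = 1 := by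
    rw [← integral_stdPdf]
    rw [← MeasureTheory.setIntegral_union (Set.Iic_disjoint_Ioi le_rfl) measurableSet_Ioi
      integrable_stdPdf.integrableOn integrable_stdPdf.integrableOn]
    rw [Set.Iic_union_Ioi]
    simp [Measure.restrict_univ]
  rw [stdCdf]
  linarith [hsym, hsplit]

lemma stdCdf_translate (h : ℝ) : ∫ u in Set.Iic h, stdPdf (u - h) = stdCdf 0 := by
  have hmp : MeasurePreserving (· - h) (volume : Measure ℝ) volume :=
    measurePreserving_sub_right volume h
  have hemb : MeasurableEmbedding (fun x : ℝ => x - h) :=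
    (MeasurableEquiv.subRight h).measurableEmbedding
  have := hmp.setIntegral_preimage_emb hemb stdPdf (Set.Iic 0)
  rw [stdCdf, ← this]
  congr 1
  ext x
  simp [sub_nonpos]

lemma stdCdf_le_half_chernoff {h : ℝ} (hh : h ≤ 0) :
    stdCdf h ≤ Real.exp (-(h ^ 2) / 2) * (1 / 2) := by
  have key : ∀ u ∈ Set.Iic h, stdPdf u ≤ Real.exp (-(h ^ 2) / 2) * stdPdf (u - h) := by
    intro u hu
    simp only [Set.mem_Iic] at hu
    rw [stdPdf_eq, stdPdf_eq, ← mul_assoc, mul_comm (Real.exp _), mul_assoc, ← Real.exp_add]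
    refine mul_le_mul_of_nonneg_left ?_ (by positivity)
    exact Real.exp_le_exp.2 (by nlinarith [mul_nonneg (neg_nonneg.2 hh) (neg_nonneg.2 (sub_nonpos.2 hu))])
  have hint : IntegrableOn (fun u => Real.exp (-(h ^ 2) / 2) * stdPdf (u - h)) (Set.Iic h) := by
    exact ((integrable_stdPdf.comp_sub_right h).const_mul _).integrableOn
  calc stdCdf h ≤ ∫ u in Set.Iic h, Real.exp (-(h ^ 2) / 2) * stdPdf (u - h) := by
        refine setIntegral_mono_on integrable_stdPdf.integrableOn hint measurableSet_Iic key
    _ = Real.exp (-(h ^ 2) / 2) * stdCdf 0 := by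
        rw [MeasureTheory.integral_const_mul, stdCdf_translate]
    _ = Real.exp (-(h ^ 2) / 2) * (1 / 2) := by rw [stdCdf_zero]

lemma log_stdCdf_le {h : ℝ} (hh : h ≤ 0) : Real.log (stdCdf h) ≤ -(1 + h ^ 2) / 2 := by
  have h2 : Real.exp (1/2 : ℝ) < 2 := by
    nlinarith [Real.exp_one_lt_d9, Real.exp_pos (1/2 : ℝ),
      Real.exp_add (1/2 : ℝ) (1/2 : ℝ)]
  have hch := stdCdf_le_half_chernoff hh
  have : stdCdf h ≤ Real.exp (-(1 + h ^ 2) / 2) := by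
    have : Real.exp (-(h^2)/2) * (1/2) ≤ Real.exp (-(1 + h ^ 2) / 2) := by
      rw [show -(1 + h^2)/2 = -(h^2)/2 + (-(1/2) : ℝ) by ring, Real.exp_add]
      have : (1/2 : ℝ) ≤ Real.exp (-(1/2)) := by
        rw [Real.exp_neg, le_inv_comm₀ (by norm_num) (Real.exp_pos _)]
        · linarith
      nlinarith [Real.exp_pos (-(h^2)/2)]
    linarith
  calc Real.log (stdCdf h) ≤ Real.log (Real.exp (-(1 + h ^ 2) / 2)) :=
        Real.log_le_log (stdCdf_pos h) this
    _ = -(1 + h ^ 2) / 2 := Real.log_exp _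

lemma tendsto_stdCdf_atBot : Tendsto stdCdf atBot (𝓝 0) := by
  have hb : ∀ᶠ h in atBot, ‖stdCdf h‖ ≤ Real.exp (-(1 + h ^ 2) / 2) := by
    filter_upwards [eventually_le_atBot (0:ℝ)] with h hh
    rw [Real.norm_eq_abs, abs_of_pos (stdCdf_pos h)]
    calc stdCdf h = Real.exp (Real.log (stdCdf h)) := (Real.exp_log (stdCdf_pos h)).symm
      _ ≤ Real.exp (-(1 + h ^ 2) / 2) := Real.exp_le_exp.2 (log_stdCdf_le hh)
  refine squeeze_zero_norm' hb ?_
  refine Real.tendsto_exp_atBot.comp ?_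
  apply Filter.tendsto_atBot_mono' _ _ (tendsto_id (α := ℝ))
  filter_upwards [eventually_le_atBot (-1:ℝ)] with h hh
  simp only [id_eq]
  nlinarith [sq_nonneg (h+1)]

lemma hasDerivAt_stdCdf (x : ℝ) : HasDerivAt stdCdf (stdPdf x) x := by
  have key : ∀ y : ℝ, stdCdf y = stdCdf 0 + ∫ t in (0:ℝ)..y, stdPdf t := by
    intro y
    have := intervalIntegral.integral_Iic_sub_Iic (μ := volume) (f := stdPdf) (a := (0:ℝ)) (b := y)
      integrable_stdPdf.integrableOn integrable_stdPdf.integrableOn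
    rw [stdCdf, stdCdf, ← this]
    ring
  have hd : HasDerivAt (fun y => stdCdf 0 + ∫ t in (0:ℝ)..y, stdPdf t) (stdPdf x) x := by
    refine HasDerivAt.const_add _ ?_
    refine intervalIntegral.integral_hasDerivAt_right
      (integrable_stdPdf.intervalIntegrable) ?_ continuous_stdPdf.continuousAt
    exact continuous_stdPdf.aestronglyMeasurable.stronglyMeasurableAtFilter
  exact (funext key) ▸ hd

lemma hasDerivAt_stdPdf (x : ℝ) : HasDerivAt stdPdf (-x * stdPdf x) x := by
  have h1 : HasDerivAt (fun t : ℝ => -(t ^ 2) / 2) (-x) x := by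
    have := ((hasDerivAt_pow 2 x).neg).div_const 2
    simpa using this.congr_deriv (by ring)
  have h2 := (h1.exp).const_mul (Real.sqrt (2 * Real.pi))⁻¹
  have : HasDerivAt stdPdf ((Real.sqrt (2 * Real.pi))⁻¹ * (Real.exp (-(x^2)/2) * (-x))) x := by
    refine (funext stdPdf_eq) ▸ h2
  refine this.congr_deriv ?_
  rw [stdPdf_eq]
  ring

noncomputable def gfun (h : ℝ) : ℝ := h * stdPdf h - 2 * (stdCdf h * Real.log (stdCdf h))

lemma hasDerivAt_gfun (x : ℝ) :
    HasDerivAt gfun (stdPdf x * (-1 - x ^ 2 - 2 * Real.log (stdCdf x))) x := by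
  have hA : HasDerivAt (fun h => h * stdPdf h) (1 * stdPdf x + x * (-x * stdPdf x)) x :=
    (hasDerivAt_id x).mul (hasDerivAt_stdPdf x)
  have hB : HasDerivAt (fun h => stdCdf h * Real.log (stdCdf h))
      ((Real.log (stdCdf x) + 1) * stdPdf x) x := by
    have := (Real.hasDerivAt_mul_log (stdCdf_pos x).ne').comp x (hasDerivAt_stdCdf x)
    simpa [Function.comp_def] using this
  have := hA.sub ((hB.const_mul 2))
  refine this.congr_deriv ?_
  ring

lemma tendsto_gfun_atBot : Tendsto gfun atBot (𝓝 0) := by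
  have t1 : Tendsto (fun h : ℝ => h * stdPdf h) atBot (𝓝 0) := by
    have base : Tendsto (fun t : ℝ => (Real.sqrt (2 * Real.pi))⁻¹ * (t ^ 1 * Real.exp (-t)))
        atTop (𝓝 ((Real.sqrt (2 * Real.pi))⁻¹ * 0)) :=
      (tendsto_pow_mul_exp_neg_atTop_nhds_zero 1).const_mul _
    have comp := base.comp tendsto_neg_atBot_atTop
    rw [mul_zero] at comp
    refine squeeze_zero_norm' ?_ comp
    filter_upwards [eventually_le_atBot (-2:ℝ)] with h hh
    show ‖h * stdPdf h‖ ≤ (Real.sqrt (2 * Real.pi))⁻¹ * ((-h) ^ 1 * Real.exp (-(-h)))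
    rw [stdPdf_eq, Real.norm_eq_abs, abs_mul, abs_mul, abs_of_nonpos (by linarith : h ≤ 0),
      abs_of_nonneg (by positivity : (0:ℝ) ≤ (Real.sqrt (2 * Real.pi))⁻¹),
      abs_of_nonneg (Real.exp_nonneg _), pow_one, neg_neg]
    have hexp : Real.exp (-(h ^ 2) / 2) ≤ Real.exp h :=
      Real.exp_le_exp.2 (by nlinarith)
    have hnh : (0:ℝ) ≤ -h := by linarith
    calc -h * ((Real.sqrt (2 * Real.pi))⁻¹ * Real.exp (-(h^2)/2))
        ≤ -h * ((Real.sqrt (2 * Real.pi))⁻¹ * Real.exp h) := by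
          apply mul_le_mul_of_nonneg_left _ hnh
          apply mul_le_mul_of_nonneg_left hexp (by positivity)
      _ = (Real.sqrt (2 * Real.pi))⁻¹ * (-h * Real.exp h) := by ring
  have t2 : Tendsto (fun h : ℝ => stdCdf h * Real.log (stdCdf h)) atBot (𝓝 0) := by
    have := (Real.continuous_mul_log.tendsto 0).comp tendsto_stdCdf_atBot
    simpa [Function.comp_def] using this
  have := t1.sub (t2.const_mul 2)
  exact (by simpa using this : Tendsto (fun x => x * stdPdf x - 2 * (stdCdf x * Real.log (stdCdf x))) atBot (𝓝 0))

lemma gfun_nonneg (h : ℝ) : 0 ≤ gfun h := by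
  rcases le_or_gt h 0 with hh | hh
  · have mono : MonotoneOn gfun (Set.Iic 0) := by
      refine monotoneOn_of_deriv_nonneg (convex_Iic 0) ?_ ?_ ?_
      · exact (continuous_iff_continuousAt.2
          fun x => (hasDerivAt_gfun x).differentiableAt.continuousAt).continuousOn
      · exact fun x _ => (hasDerivAt_gfun x).differentiableAt.differentiableWithinAt
      · intro x hx
        rw [interior_Iic] at hx
        rw [(hasDerivAt_gfun x).deriv]
        have hlog := log_stdCdf_le (le_of_lt hx)
        have := (stdPdf_pos x).le
        nlinarith
    refine le_of_tendsto tendsto_gfun_atBot ?_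
    filter_upwards [eventually_le_atBot h] with t ht
    exact mono (Set.mem_Iic.2 (le_trans ht hh)) (Set.mem_Iic.2 hh) ht
  · have h1 : 0 ≤ h * stdPdf h := mul_nonneg hh.le (stdPdf_pos h).le
    have h2 : Real.log (stdCdf h) ≤ 0 := Real.log_nonpos (stdCdf_pos h).le (stdCdf_le_one h)
    have h3 : stdCdf h * Real.log (stdCdf h) ≤ 0 :=
      mul_nonpos_of_nonneg_of_nonpos (stdCdf_pos h).le h2
    unfold gfun
    nlinarith

lemma key_ineq (h : ℝ) : 0 ≤ h * stdPdf h / (2 * stdCdf h) - Real.log (stdCdf h) := by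
  have hg := gfun_nonneg h
  have hc := stdCdf_pos h
  rw [sub_nonneg, le_div_iff₀ (by positivity)]
  unfold gfun at hg
  nlinarith

theorem stmt_8 (μ σx fstar : ℝ) (hσx : 0 < σx) :
    (let h := (fstar - μ) / σx
     (1 / 2) * Real.log (2 * Real.pi * Real.exp 1 * σx ^ 2) + Real.log (stdCdf h) -
        h * stdPdf h / (2 * stdCdf h) ≤
       (1 / 2) * Real.log (2 * Real.pi * Real.exp 1 * σx ^ 2)) ∧
    ∀ h : ℝ, 0 ≤ h * stdPdf h / (2 * stdCdf h) - Real.log (stdCdf h) := by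
  refine ⟨?_, key_ineq⟩
  have := key_ineq ((fstar - μ) / σx)
  dsimp only
  linarith
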